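/- Let R be a commutative Bezout domain and let a be a nonzero element of R. Then R/aR is a Kasch ring if and only if every maximal ideal of R containing a is principal. -/

import Mathlib

/-- A commutative ring is *zip* if every ideal with zero annihilator contains a
finitely generated subideal with zero annihilator. -/
def IsZipRing (R : Type*) [CommRing R] : Prop :=
  ∀ I : Ideal R, Submodule.annihilator I = ⊥ →
    ∃ I₀ : Ideal R, I₀ ≤ I ∧ I₀.FG ∧ Submodule.annihilator I₀ = ⊥

/-- A commutative ring is *Kasch* if every proper ideal has nonzero annihilator. -/
def IsKaschRing (R : Type*) [CommRing R] : Prop :=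
  ∀ I : Ideal R, I ≠ ⊤ → Submodule.annihilator I ≠ ⊥

/-- For a Bezout domain R and 0 ≠ a, R/aR is Kasch iff every maximal
ideal of R containing a is principal. -/
theorem kasch_quotient_iff_maximal_principal (R : Type*) [CommRing R] [IsDomain R]
    [IsBezout R] (a : R) (ha : a ≠ 0) :
    IsKaschRing (R ⧸ Ideal.span {a}) ↔
      ∀ M : Ideal R, M.IsMaximal → a ∈ M → ∃ m : R, M = Ideal.span {m} := by
  set π := Ideal.Quotient.mk (Ideal.span {a}) with hπ
  constructor
  · -- Kasch → maximal ideals containing a are principal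
    intro hK M hM haM
    have hMtop : M ≠ ⊤ := hM.ne_top
    have hspanle : Ideal.span {a} ≤ M := by
      rw [Ideal.span_le]; simpa using haM
    have hItop : M.map π ≠ ⊤ := by
      intro h
      apply hMtop
      have h2 : (M.map π).comap π = ⊤ := by rw [h]; exact Ideal.comap_top
      rw [Ideal.comap_map_of_surjective π Ideal.Quotient.mk_surjective] at h2
      have hker : Ideal.comap π ⊥ = Ideal.span {a} := by
        rw [← RingHom.ker_eq_comap_bot]; exact Ideal.mk_ker
      rw [hker, sup_eq_left.mpr hspanle] at h2
      exact h2
    obtain ⟨β, hβann, hβ0⟩ := (Submodule.ne_bot_iff _).mp (hK (M.map π) hItop)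
    obtain ⟨b, rfl⟩ := Ideal.Quotient.mk_surjective β
    have hbnot : b ∉ Ideal.span {a} := fun h => hβ0 (Ideal.Quotient.eq_zero_iff_mem.mpr h)
    have hbM : ∀ x ∈ M, b * x ∈ Ideal.span {a} := by
      intro x hx
      have := Submodule.mem_annihilator.mp hβann (π x) (Ideal.mem_map_of_mem π hx)
      rw [smul_eq_mul, ← map_mul] at this
      exact Ideal.Quotient.eq_zero_iff_mem.mp this
    -- Bezout: span {a, b} is principal
    have hFG : (Ideal.span ({a, b} : Set R)).FG := Submodule.fg_span (Set.toFinite _)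
    obtain ⟨d, hd⟩ := (IsBezout.isPrincipal_of_FG _ hFG)
    have hda : a ∈ Ideal.span ({d} : Set R) := by
      show a ∈ Submodule.span R ({d} : Set R)
      rw [← hd]; exact Ideal.subset_span (by simp)
    have hdb : b ∈ Ideal.span ({d} : Set R) := by
      show b ∈ Submodule.span R ({d} : Set R)
      rw [← hd]; exact Ideal.subset_span (by simp)
    obtain ⟨a', ha'⟩ := Ideal.mem_span_singleton'.mp hda
    obtain ⟨b', hb'⟩ := Ideal.mem_span_singleton'.mp hdb
    have hdmem : d ∈ Ideal.span ({a, b} : Set R) := by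
      rw [hd]; exact Ideal.subset_span (by simp)
    obtain ⟨u, v, huv⟩ := Ideal.mem_span_pair.mp hdmem
    have hd0 : d ≠ 0 := by
      rintro rfl; apply ha; rw [← ha', mul_zero]
    have h1 : u * a' + v * b' = 1 := by
      apply mul_right_cancel₀ hd0
      rw [one_mul]
      calc (u * a' + v * b') * d = u * (a' * d) + v * (b' * d) := by ring
        _ = u * a + v * b := by rw [ha', hb']
        _ = d := huv
    have hna' : ¬ IsUnit a' := by
      intro hu
      obtain ⟨w, rfl⟩ := hu
      apply hbnot
      rw [Ideal.mem_span_singleton']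
      refine ⟨b' * ↑w⁻¹, ?_⟩
      calc b' * ↑w⁻¹ * a = (↑w⁻¹ * ↑w) * (b' * d) := by rw [← ha']; ring
        _ = b := by rw [w.inv_mul, one_mul, hb']
    have hle : M ≤ Ideal.span ({a'} : Set R) := by
      intro x hx
      obtain ⟨c, hc⟩ := Ideal.mem_span_singleton'.mp (hbM x hx)
      -- hc : c * a = b * x
      have hbx : b' * x = c * a' := by
        apply mul_right_cancel₀ hd0
        calc b' * x * d = (b' * d) * x := by ring
          _ = b * x := by rw [hb']
          _ = c * a := hc.symm
          _ = c * (a' * d) := by rw [ha']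
          _ = c * a' * d := by ring
      rw [Ideal.mem_span_singleton']
      refine ⟨u * x + v * c, ?_⟩
      calc (u * x + v * c) * a' = (u * a') * x + v * (c * a') := by ring
        _ = (u * a') * x + v * (b' * x) := by rw [hbx]
        _ = (u * a' + v * b') * x := by ring
        _ = x := by rw [h1, one_mul]
    have hsptop : Ideal.span ({a'} : Set R) ≠ ⊤ := fun h =>
      hna' (Ideal.span_singleton_eq_top.mp h)
    exact ⟨a', hM.eq_of_le hsptop hle⟩
  · -- maximal ideals principal → Kasch
    intro h I hItop
    obtain ⟨N, hN, hIN⟩ := Ideal.exists_le_maximal I hItop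
    haveI := hN
    have hMmax : (N.comap π).IsMaximal :=
      Ideal.comap_isMaximal_of_surjective π Ideal.Quotient.mk_surjective
    have haM : a ∈ N.comap π := by
      rw [Ideal.mem_comap]
      have : π a = 0 := Ideal.Quotient.eq_zero_iff_mem.mpr (Ideal.subset_span (by simp))
      rw [this]; exact N.zero_mem
    obtain ⟨m, hm⟩ := h (N.comap π) hMmax haM
    have hma : m ∣ a := Ideal.mem_span_singleton.mp (hm ▸ haM)
    obtain ⟨b, hb⟩ := hma
    have hb0 : π b ≠ 0 := by
      intro h0
      obtain ⟨c, hc⟩ := Ideal.mem_span_singleton'.mp (Ideal.Quotient.eq_zero_iff_mem.mp h0)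
      -- hc : c * a = b
      have hbne : b ≠ 0 := by rintro rfl; exact ha (by rw [hb, mul_zero])
      have : m * c = 1 := by
        apply mul_left_cancel₀ hbne
        rw [mul_one]
        calc b * (m * c) = c * (m * b) := by ring
          _ = c * a := by rw [← hb]
          _ = b := hc
      have : IsUnit m := IsUnit.of_mul_eq_one (a := m) c this
      exact hMmax.ne_top (by rw [hm, Ideal.span_singleton_eq_top]; exact this)
    have hbann : π b ∈ Submodule.annihilator I := by
      rw [Submodule.mem_annihilator]
      intro y hy
      obtain ⟨x, rfl⟩ := Ideal.Quotient.mk_surjective y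
      have hxM : x ∈ N.comap π := Ideal.mem_comap.mpr (hIN hy)
      obtain ⟨t, ht⟩ := Ideal.mem_span_singleton.mp (hm ▸ hxM)
      rw [smul_eq_mul, ← map_mul]
      apply Ideal.Quotient.eq_zero_iff_mem.mpr
      rw [Ideal.mem_span_singleton]
      exact ⟨t, by rw [ht, hb]; ring⟩
    intro hbot
    rw [hbot, Submodule.mem_bot] at hbann
    exact hb0 hbann
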